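/- (Positive semi-definiteness of the interaction quadratic form) Let $u \in C^1(\mathbb{R}^4, \mathbb{C})$ and define for $x, y \in \mathbb{R}^4$ the matrix $\Phi_{jk}(x,y) = |u(y)|^2 \mathrm{Re}(\bar u_k u_j)(x) - \mathrm{Im}(\bar u u_j)(y)\,\mathrm{Im}(\bar u u_k)(x)$ and its symmetrization $\Psi_{jk}(x,y) = \tfrac12 \Phi_{jk}(x,y) + \tfrac12 \Phi_{jk}(y,x)$. Then for every $e \in \mathbb{R}^4$, $\sum_{j,k} e_j e_k \Psi_{jk}(x,y) \geq 0$. -/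

import Mathlib

open MeasureTheory Real
noncomputable section

abbrev E4 := EuclideanSpace ℝ (Fin 4)

def pdC (f : E4 → ℂ) (k : Fin 4) (x : E4) : ℂ := fderiv ℝ f x (EuclideanSpace.single k 1)

def Phi (u : E4 → ℂ) (j k : Fin 4) (x y : E4) : ℝ :=
  ‖u y‖ ^ 2 * ((starRingEnd ℂ) (pdC u k x) * pdC u j x).re
    - ((starRingEnd ℂ) (u y) * pdC u j y).im * ((starRingEnd ℂ) (u x) * pdC u k x).im

/-- Positive semi-definiteness of the symmetrized interaction quadratic form:
for `u ∈ C¹(ℝ⁴, ℂ)` and `Ψ_{jk}(x,y) = ½Φ_{jk}(x,y) + ½Φ_{jk}(y,x)`, one has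
`∑_{j,k} e_j e_k Ψ_{jk}(x,y) ≥ 0` for every `e ∈ ℝ⁴`. -/
theorem stmt8 (u : E4 → ℂ) (hu : ContDiff ℝ 1 u) (x y : E4) (e : Fin 4 → ℝ) :
    0 ≤ ∑ j, ∑ k, e j * e k * ((1/2) * Phi u j k x y + (1/2) * Phi u j k y x) := by
  set V : ℂ := ∑ j, (e j : ℂ) * pdC u j x with hV
  set W : ℂ := ∑ j, (e j : ℂ) * pdC u j y with hW
  have key : ∑ j, ∑ k, e j * e k * ((1/2) * Phi u j k x y + (1/2) * Phi u j k y x)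
      = (1/2) * ‖u y‖ ^ 2 * ((starRingEnd ℂ) V * V).re
        + (1/2) * ‖u x‖ ^ 2 * ((starRingEnd ℂ) W * W).re
        - ((starRingEnd ℂ) (u y) * W).im * ((starRingEnd ℂ) (u x) * V).im := by
    rw [hV, hW]
    simp only [Phi, Fin.sum_univ_four, map_add, map_mul, Complex.conj_ofReal,
      Complex.add_re, Complex.add_im, Complex.mul_re, Complex.mul_im,
      Complex.ofReal_re, Complex.ofReal_im, Complex.conj_re, Complex.conj_im]
    ring
  rw [key]
  have hre : ∀ z : ℂ, ((starRingEnd ℂ) z * z).re = ‖z‖ ^ 2 := by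
    intro z
    rw [mul_comm, Complex.mul_conj]
    simp [Complex.normSq_eq_norm_sq, ← Complex.ofReal_pow]
  rw [hre, hre]
  have h1 : |((starRingEnd ℂ) (u y) * W).im| ≤ ‖u y‖ * ‖W‖ := by
    calc |((starRingEnd ℂ) (u y) * W).im| ≤ ‖(starRingEnd ℂ) (u y) * W‖ :=
          Complex.abs_im_le_norm _
      _ = ‖u y‖ * ‖W‖ := by rw [norm_mul, RCLike.norm_conj]
  have h2 : |((starRingEnd ℂ) (u x) * V).im| ≤ ‖u x‖ * ‖V‖ := by
    calc |((starRingEnd ℂ) (u x) * V).im| ≤ ‖(starRingEnd ℂ) (u x) * V‖ :=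
          Complex.abs_im_le_norm _
      _ = ‖u x‖ * ‖V‖ := by rw [norm_mul, RCLike.norm_conj]
  have h3 : ((starRingEnd ℂ) (u y) * W).im * ((starRingEnd ℂ) (u x) * V).im
      ≤ (‖u y‖ * ‖W‖) * (‖u x‖ * ‖V‖) := by
    calc ((starRingEnd ℂ) (u y) * W).im * ((starRingEnd ℂ) (u x) * V).im
        ≤ |((starRingEnd ℂ) (u y) * W).im * ((starRingEnd ℂ) (u x) * V).im| := le_abs_self _
      _ = |((starRingEnd ℂ) (u y) * W).im| * |((starRingEnd ℂ) (u x) * V).im| := abs_mul _ _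
      _ ≤ (‖u y‖ * ‖W‖) * (‖u x‖ * ‖V‖) :=
          mul_le_mul h1 h2 (abs_nonneg _) (mul_nonneg (norm_nonneg _) (norm_nonneg _))
  nlinarith [sq_nonneg (‖u y‖ * ‖V‖ - ‖u x‖ * ‖W‖), h3]

end
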